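/- (Volume lower bound for traces, Bollobás–Radcliffe) For any positive integers a ≤ n and any family F ⊆ 2^[n] with 1 ≤ |F| ≤ 2^n, there exists an a-element subset T ⊆ [n] with |F|_T| ≥ |F|^{a/n}. -/

import Mathlib

open Finset

set_option linter.unusedSectionVars false
set_option maxHeartbeats 1000000

namespace VolumeLB

variable {α : Type*} [DecidableEq α]

def nu (𝓕 : Finset (Finset α)) (W X : Finset α) : ℕ := (𝓕.filter fun B => B ∩ W = X).card

variable {𝓕 : Finset (Finset α)}

lemma inter_absorb {V W A : Finset α} (h : V ⊆ W) : (A ∩ W) ∩ V = A ∩ V := by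
  rw [inter_assoc, Finset.inter_eq_right.mpr h]

lemma fiber_marginal {W V : Finset α} (hVW : V ⊆ W) (X : Finset α) :
    ∑ B ∈ (𝓕.image (· ∩ W)).filter (· ∩ V = X), nu 𝓕 W B = nu 𝓕 V X := by
  rw [nu, Finset.card_eq_sum_card_fiberwise
    (f := (· ∩ W)) (t := (𝓕.image (· ∩ W)).filter (· ∩ V = X)) ?_]
  · refine Finset.sum_congr rfl fun B hB => ?_
    obtain ⟨hBim, hBV⟩ := Finset.mem_filter.mp hB
    rw [Finset.filter_filter, nu]
    congr 1
    apply Finset.filter_congr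
    intro A hA
    constructor
    · intro h
      exact ⟨by rw [← hBV, ← h, inter_absorb hVW], h⟩
    · intro h
      exact h.2
  · intro A hA
    obtain ⟨hA1, hA2⟩ := Finset.mem_filter.mp hA
    exact Finset.mem_filter.mpr ⟨Finset.mem_image_of_mem _ hA1, by rw [inter_absorb hVW, hA2]⟩

lemma key_count (S T X : Finset α) :
    ∑ C ∈ (𝓕.image (· ∩ (S ∪ T))).filter (· ∩ (S ∩ T) = X),
      ((nu 𝓕 S (C ∩ S) : ℝ) * nu 𝓕 T (C ∩ T)) ≤ (nu 𝓕 (S ∩ T) X : ℝ) ^ 2 := by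
  classical
  set GX := (𝓕.image (· ∩ (S ∪ T))).filter (· ∩ (S ∩ T) = X) with hGX
  set SX := (𝓕.image (· ∩ S)).filter (· ∩ (S ∩ T) = X) with hSX
  set TX := (𝓕.image (· ∩ T)).filter (· ∩ (S ∩ T) = X) with hTX
  have hself : ∀ C ∈ GX, C ∩ (S ∪ T) = C := by
    intro C hC
    obtain ⟨A, _, rfl⟩ := Finset.mem_image.mp (Finset.mem_filter.mp hC).1
    rw [inter_assoc, inter_self]
  have hinj : ∀ C₁ ∈ GX, ∀ C₂ ∈ GX,
      (fun C => (C ∩ S, C ∩ T)) C₁ = (fun C => (C ∩ S, C ∩ T)) C₂ → C₁ = C₂ := by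
    intro C₁ h₁ C₂ h₂ h
    simp only [Prod.mk.injEq] at h
    rw [← hself C₁ h₁, ← hself C₂ h₂, Finset.inter_union_distrib_left,
      Finset.inter_union_distrib_left, h.1, h.2]
  have hsub : GX.image (fun C => (C ∩ S, C ∩ T)) ⊆ SX ×ˢ TX := by
    intro p hp
    obtain ⟨C, hC, rfl⟩ := Finset.mem_image.mp hp
    obtain ⟨hCim, hCX⟩ := Finset.mem_filter.mp hC
    obtain ⟨A, hA, rfl⟩ := Finset.mem_image.mp hCim
    refine Finset.mem_product.mpr
      ⟨Finset.mem_filter.mpr ⟨?_, ?_⟩, Finset.mem_filter.mpr ⟨?_, ?_⟩⟩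
    · exact Finset.mem_image.mpr ⟨A, hA, by rw [inter_absorb Finset.subset_union_left]⟩
    · rw [inter_absorb Finset.inter_subset_left]
      exact hCX
    · exact Finset.mem_image.mpr ⟨A, hA, by rw [inter_absorb Finset.subset_union_right]⟩
    · rw [inter_absorb Finset.inter_subset_right]
      exact hCX
  have e1 : ∑ C ∈ GX, ((nu 𝓕 S (C ∩ S) : ℝ) * nu 𝓕 T (C ∩ T))
      = ∑ p ∈ GX.image (fun C => (C ∩ S, C ∩ T)), ((nu 𝓕 S p.1 : ℝ) * nu 𝓕 T p.2) := by
    rw [Finset.sum_image hinj]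
  have e2 : ∑ p ∈ GX.image (fun C => (C ∩ S, C ∩ T)), ((nu 𝓕 S p.1 : ℝ) * nu 𝓕 T p.2)
      ≤ ∑ p ∈ SX ×ˢ TX, ((nu 𝓕 S p.1 : ℝ) * nu 𝓕 T p.2) :=
    Finset.sum_le_sum_of_subset_of_nonneg hsub (fun p _ _ => by positivity)
  have e3 : ∑ p ∈ SX ×ˢ TX, ((nu 𝓕 S p.1 : ℝ) * nu 𝓕 T p.2)
      = (∑ B ∈ SX, (nu 𝓕 S B : ℝ)) * (∑ B ∈ TX, (nu 𝓕 T B : ℝ)) := by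
    rw [Finset.sum_product, Finset.sum_mul_sum]
  have e4 : (∑ B ∈ SX, (nu 𝓕 S B : ℝ)) * (∑ B ∈ TX, (nu 𝓕 T B : ℝ))
      = (nu 𝓕 (S ∩ T) X : ℝ) ^ 2 := by
    rw [← Nat.cast_sum, ← Nat.cast_sum, hSX, hTX,
      fiber_marginal Finset.inter_subset_left X,
      fiber_marginal Finset.inter_subset_right X, sq]
  rw [e1]
  rw [e3, e4] at e2
  exact e2




lemma nu_pos {W A : Finset α} (hA : A ∈ 𝓕) : 0 < nu 𝓕 W (A ∩ W) :=
  Finset.card_pos.mpr ⟨A, Finset.mem_filter.mpr ⟨hA, rfl⟩⟩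

lemma sum_ratio_le (S T : Finset α) :
    ∑ A ∈ 𝓕, ((nu 𝓕 S (A ∩ S) : ℝ) * nu 𝓕 T (A ∩ T)) /
      ((nu 𝓕 (S ∪ T) (A ∩ (S ∪ T)) : ℝ) * nu 𝓕 (S ∩ T) (A ∩ (S ∩ T))) ≤ 𝓕.card := by
  rw [← Finset.sum_fiberwise_of_maps_to
    (g := (· ∩ (S ∪ T))) (t := 𝓕.image (· ∩ (S ∪ T)))
    (fun A hA => Finset.mem_image_of_mem _ hA)]
  have step1 : ∀ C ∈ 𝓕.image (· ∩ (S ∪ T)),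
      (∑ A ∈ 𝓕.filter (· ∩ (S ∪ T) = C),
        ((nu 𝓕 S (A ∩ S) : ℝ) * nu 𝓕 T (A ∩ T)) /
          ((nu 𝓕 (S ∪ T) (A ∩ (S ∪ T)) : ℝ) * nu 𝓕 (S ∩ T) (A ∩ (S ∩ T))))
        = ((nu 𝓕 S (C ∩ S) : ℝ) * nu 𝓕 T (C ∩ T)) / nu 𝓕 (S ∩ T) (C ∩ (S ∩ T)) := by
    intro C hC
    obtain ⟨A₀, hA₀, hA₀C⟩ := Finset.mem_image.mp hC
    have hCpos : 0 < nu 𝓕 (S ∪ T) C := by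
      rw [← hA₀C]; exact nu_pos hA₀
    have hval : ∀ A ∈ 𝓕.filter (· ∩ (S ∪ T) = C),
        ((nu 𝓕 S (A ∩ S) : ℝ) * nu 𝓕 T (A ∩ T)) /
          ((nu 𝓕 (S ∪ T) (A ∩ (S ∪ T)) : ℝ) * nu 𝓕 (S ∩ T) (A ∩ (S ∩ T)))
        = ((nu 𝓕 S (C ∩ S) : ℝ) * nu 𝓕 T (C ∩ T)) /
            ((nu 𝓕 (S ∪ T) C : ℝ) * nu 𝓕 (S ∩ T) (C ∩ (S ∩ T))) := by
      intro A hA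
      obtain ⟨hA𝓕, hAC⟩ := Finset.mem_filter.mp hA
      rw [← hAC, inter_absorb Finset.subset_union_left,
        inter_absorb Finset.subset_union_right,
        inter_absorb Finset.inter_subset_union]
    rw [Finset.sum_congr rfl hval, Finset.sum_const]
    have hcard : (𝓕.filter (· ∩ (S ∪ T) = C)).card = nu 𝓕 (S ∪ T) C := rfl
    rw [hcard, nsmul_eq_mul]
    have h0 : (nu 𝓕 (S ∪ T) C : ℝ) ≠ 0 := by positivity
    have hIpos : 0 < nu 𝓕 (S ∩ T) (C ∩ (S ∩ T)) := by
      rw [← hA₀C, inter_absorb Finset.inter_subset_union]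
      exact nu_pos hA₀
    have hI0 : (nu 𝓕 (S ∩ T) (C ∩ (S ∩ T)) : ℝ) ≠ 0 := by positivity
    field_simp
  rw [Finset.sum_congr rfl step1]
  rw [← Finset.sum_fiberwise_of_maps_to
    (g := (· ∩ (S ∩ T))) (t := (𝓕.image (· ∩ (S ∪ T))).image (· ∩ (S ∩ T)))
    (fun C hC => Finset.mem_image_of_mem _ hC)]
  have step2 : ∀ X ∈ (𝓕.image (· ∩ (S ∪ T))).image (· ∩ (S ∩ T)),
      (∑ C ∈ (𝓕.image (· ∩ (S ∪ T))).filter (· ∩ (S ∩ T) = X),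
        ((nu 𝓕 S (C ∩ S) : ℝ) * nu 𝓕 T (C ∩ T)) / nu 𝓕 (S ∩ T) (C ∩ (S ∩ T)))
      ≤ (nu 𝓕 (S ∩ T) X : ℝ) := by
    intro X hX
    obtain ⟨C₀, hC₀, hC₀X⟩ := Finset.mem_image.mp hX
    obtain ⟨A₀, hA₀, hA₀C⟩ := Finset.mem_image.mp hC₀
    have hXpos : 0 < nu 𝓕 (S ∩ T) X := by
      rw [← hC₀X, ← hA₀C, inter_absorb Finset.inter_subset_union]
      exact nu_pos hA₀
    have hX0 : (0:ℝ) < nu 𝓕 (S ∩ T) X := by exact_mod_cast hXpos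
    have hrw : ∀ C ∈ (𝓕.image (· ∩ (S ∪ T))).filter (· ∩ (S ∩ T) = X),
        ((nu 𝓕 S (C ∩ S) : ℝ) * nu 𝓕 T (C ∩ T)) / nu 𝓕 (S ∩ T) (C ∩ (S ∩ T))
        = ((nu 𝓕 S (C ∩ S) : ℝ) * nu 𝓕 T (C ∩ T)) / nu 𝓕 (S ∩ T) X := by
      intro C hC
      rw [(Finset.mem_filter.mp hC).2]
    rw [Finset.sum_congr rfl hrw, ← Finset.sum_div, div_le_iff₀ hX0]
    calc ∑ C ∈ (𝓕.image (· ∩ (S ∪ T))).filter (· ∩ (S ∩ T) = X),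
          ((nu 𝓕 S (C ∩ S) : ℝ) * nu 𝓕 T (C ∩ T))
        ≤ (nu 𝓕 (S ∩ T) X : ℝ) ^ 2 := key_count S T X
      _ = (nu 𝓕 (S ∩ T) X : ℝ) * (nu 𝓕 (S ∩ T) X : ℝ) := sq (nu 𝓕 (S ∩ T) X : ℝ) ▸ by ring
  refine le_trans (Finset.sum_le_sum step2) ?_
  have htot : ∑ X ∈ (𝓕.image (· ∩ (S ∪ T))).image (· ∩ (S ∩ T)), (nu 𝓕 (S ∩ T) X) = 𝓕.card := by
    rw [eq_comm]
    exact Finset.card_eq_sum_card_fiberwise (fun A hA => Finset.mem_image.mpr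
      ⟨A ∩ (S ∪ T), Finset.mem_image_of_mem _ hA, inter_absorb Finset.inter_subset_union⟩)
  rw [← Nat.cast_sum, htot]


lemma log_jensen {ι : Type*} {s : Finset ι} (w z : ι → ℝ) (hw : ∀ i ∈ s, 0 ≤ w i)
    (hw' : ∑ i ∈ s, w i = 1) (hz : ∀ i ∈ s, 0 < z i) :
    ∑ i ∈ s, w i * Real.log (z i) ≤ Real.log (∑ i ∈ s, w i * z i) := by
  have h := Real.geom_mean_le_arith_mean_weighted s w z hw hw' (fun i hi => (hz i hi).le)
  have hpos : 0 < ∏ i ∈ s, z i ^ w i :=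
    Finset.prod_pos fun i hi => Real.rpow_pos_of_pos (hz i hi) _
  calc ∑ i ∈ s, w i * Real.log (z i)
      = Real.log (∏ i ∈ s, z i ^ w i) := by
        rw [Real.log_prod (fun i hi => (Real.rpow_pos_of_pos (hz i hi) _).ne')]
        exact (Finset.sum_congr rfl fun i hi => (Real.log_rpow (hz i hi) (w i)).symm)
    _ ≤ Real.log (∑ i ∈ s, w i * z i) := Real.log_le_log hpos h

lemma sum_log_le (hne : 𝓕.Nonempty) (x : Finset α → ℝ) (hx : ∀ A ∈ 𝓕, 0 < x A) :
    ∑ A ∈ 𝓕, Real.log (x A) ≤ 𝓕.card * Real.log ((∑ A ∈ 𝓕, x A) / 𝓕.card) := by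
  have hm : (0:ℝ) < 𝓕.card := by
    exact_mod_cast Finset.card_pos.mpr hne
  have h := log_jensen (s := 𝓕) (fun _ => (𝓕.card:ℝ)⁻¹) x
    (fun i _ => by positivity) (by simp [Finset.sum_const]; field_simp) hx
  simp only [← Finset.mul_sum] at h
  have h2 : (𝓕.card:ℝ)⁻¹ * ∑ A ∈ 𝓕, Real.log (x A)
      ≤ Real.log ((∑ A ∈ 𝓕, x A) / 𝓕.card) := by
    simpa [div_eq_inv_mul] using h
  calc ∑ A ∈ 𝓕, Real.log (x A)
      = 𝓕.card * ((𝓕.card:ℝ)⁻¹ * ∑ A ∈ 𝓕, Real.log (x A)) := by field_simp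
    _ ≤ 𝓕.card * Real.log ((∑ A ∈ 𝓕, x A) / 𝓕.card) := by
        exact mul_le_mul_of_nonneg_left h2 hm.le

noncomputable def L (𝓕 : Finset (Finset α)) (S : Finset α) : ℝ :=
  ∑ A ∈ 𝓕, Real.log (nu 𝓕 S (A ∩ S))

noncomputable def ent (𝓕 : Finset (Finset α)) (S : Finset α) : ℝ :=
  Real.log 𝓕.card - L 𝓕 S / 𝓕.card

lemma L_le_add (hne : 𝓕.Nonempty) (S T : Finset α) :
    L 𝓕 S + L 𝓕 T ≤ L 𝓕 (S ∪ T) + L 𝓕 (S ∩ T) := by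
  have hm : (0:ℝ) < 𝓕.card := by exact_mod_cast Finset.card_pos.mpr hne
  set x : Finset α → ℝ := fun A =>
    ((nu 𝓕 S (A ∩ S) : ℝ) * nu 𝓕 T (A ∩ T)) /
      ((nu 𝓕 (S ∪ T) (A ∩ (S ∪ T)) : ℝ) * nu 𝓕 (S ∩ T) (A ∩ (S ∩ T))) with hx
  have hxpos : ∀ A ∈ 𝓕, 0 < x A := by
    intro A hA
    rw [hx]
    have h1 := nu_pos (W := S) hA
    have h2 := nu_pos (W := T) hA
    have h3 := nu_pos (W := S ∪ T) hA
    have h4 := nu_pos (W := S ∩ T) hA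
    positivity
  have h1 := sum_log_le hne x hxpos
  have h2 : (∑ A ∈ 𝓕, x A) / 𝓕.card ≤ 1 := by
    rw [div_le_one hm]
    exact sum_ratio_le S T
  have hsnn : (0:ℝ) ≤ ∑ A ∈ 𝓕, x A :=
    Finset.sum_nonneg fun A hA => (hxpos A hA).le
  have h3 : Real.log ((∑ A ∈ 𝓕, x A) / 𝓕.card) ≤ 0 :=
    Real.log_nonpos (by positivity) h2
  have h4 : ∑ A ∈ 𝓕, Real.log (x A) ≤ 0 := le_trans h1 (by nlinarith)
  have h5 : ∀ A ∈ 𝓕, Real.log (x A)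
      = Real.log (nu 𝓕 S (A ∩ S)) + Real.log (nu 𝓕 T (A ∩ T))
        - (Real.log (nu 𝓕 (S ∪ T) (A ∩ (S ∪ T)))
            + Real.log (nu 𝓕 (S ∩ T) (A ∩ (S ∩ T)))) := by
    intro A hA
    have p1 : (0:ℝ) < nu 𝓕 S (A ∩ S) := by exact_mod_cast nu_pos hA
    have p2 : (0:ℝ) < nu 𝓕 T (A ∩ T) := by exact_mod_cast nu_pos hA
    have p3 : (0:ℝ) < nu 𝓕 (S ∪ T) (A ∩ (S ∪ T)) := by exact_mod_cast nu_pos hA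
    have p4 : (0:ℝ) < nu 𝓕 (S ∩ T) (A ∩ (S ∩ T)) := by exact_mod_cast nu_pos hA
    rw [hx]
    rw [Real.log_div (by positivity) (by positivity), Real.log_mul p1.ne' p2.ne',
      Real.log_mul p3.ne' p4.ne']
  rw [Finset.sum_congr rfl h5, Finset.sum_sub_distrib, Finset.sum_add_distrib,
    Finset.sum_add_distrib] at h4
  unfold L
  linarith

lemma ent_submodular (hne : 𝓕.Nonempty) (S T : Finset α) :
    ent 𝓕 (S ∪ T) + ent 𝓕 (S ∩ T) ≤ ent 𝓕 S + ent 𝓕 T := by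
  have hm : (0:ℝ) < 𝓕.card := by exact_mod_cast Finset.card_pos.mpr hne
  have h := L_le_add hne S T
  have h' : (L 𝓕 S + L 𝓕 T) / 𝓕.card ≤ (L 𝓕 (S ∪ T) + L 𝓕 (S ∩ T)) / 𝓕.card := by
    gcongr
  rw [add_div, add_div] at h'
  unfold ent
  linarith

lemma ent_empty (hne : 𝓕.Nonempty) : ent 𝓕 (∅ : Finset α) = 0 := by
  have hm : (0:ℝ) < 𝓕.card := by exact_mod_cast Finset.card_pos.mpr hne
  have hL : L 𝓕 ∅ = 𝓕.card * Real.log 𝓕.card := by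
    unfold L
    have hval : ∀ A ∈ 𝓕, Real.log (nu 𝓕 (∅ : Finset α) (A ∩ ∅)) = Real.log 𝓕.card := by
      intro A hA
      congr 2
      rw [Finset.inter_empty]
      unfold nu
      rw [Finset.filter_true_of_mem (fun B _ => Finset.inter_empty B)]
    rw [Finset.sum_congr rfl hval, Finset.sum_const, nsmul_eq_mul]
  unfold ent
  rw [hL]
  field_simp
  ring

lemma ent_univ [Fintype α] (hne : 𝓕.Nonempty) :
    ent 𝓕 (Finset.univ : Finset α) = Real.log 𝓕.card := by
  have hL : L 𝓕 Finset.univ = 0 := by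
    unfold L
    refine Finset.sum_eq_zero fun A hA => ?_
    have h1 : nu 𝓕 Finset.univ (A ∩ Finset.univ) = 1 := by
      unfold nu
      rw [Finset.inter_univ]
      have : (𝓕.filter fun B => B ∩ Finset.univ = A) = {A} := by
        ext B
        simp only [Finset.mem_filter, Finset.inter_univ, Finset.mem_singleton]
        constructor
        · exact fun h => h.2
        · rintro rfl
          exact ⟨hA, rfl⟩
      rw [this, Finset.card_singleton]
    rw [h1]
    simp
  unfold ent
  rw [hL]
  simp

lemma ent_le_log_trace (hne : 𝓕.Nonempty) (S : Finset α) :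
    ent 𝓕 S ≤ Real.log ((𝓕.image (· ∩ S)).card) := by
  have hm : (0:ℝ) < 𝓕.card := by exact_mod_cast Finset.card_pos.mpr hne
  have hk : (0:ℝ) < ((𝓕.image (· ∩ S)).card : ℝ) := by
    exact_mod_cast Finset.card_pos.mpr (hne.image _)
  have h1 := sum_log_le hne (fun A => ((nu 𝓕 S (A ∩ S) : ℝ))⁻¹) (fun A hA => by
    have := nu_pos (W := S) hA
    positivity)
  have h2 : ∑ A ∈ 𝓕, ((nu 𝓕 S (A ∩ S) : ℝ))⁻¹ = ((𝓕.image (· ∩ S)).card : ℝ) := by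
    rw [← Finset.sum_fiberwise_of_maps_to (g := (· ∩ S)) (t := 𝓕.image (· ∩ S))
      (fun A hA => Finset.mem_image_of_mem _ hA)]
    rw [Finset.card_eq_sum_ones (𝓕.image (· ∩ S)), Nat.cast_sum]
    refine Finset.sum_congr rfl fun B hB => ?_
    obtain ⟨A₀, hA₀, rfl⟩ := Finset.mem_image.mp hB
    have hval : ∀ A ∈ 𝓕.filter (· ∩ S = A₀ ∩ S),
        ((nu 𝓕 S (A ∩ S) : ℝ))⁻¹ = ((nu 𝓕 S (A₀ ∩ S) : ℝ))⁻¹ := by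
      intro A hA
      rw [(Finset.mem_filter.mp hA).2]
    rw [Finset.sum_congr rfl hval, Finset.sum_const]
    have hcard : (𝓕.filter (· ∩ S = A₀ ∩ S)).card = nu 𝓕 S (A₀ ∩ S) := rfl
    rw [hcard, nsmul_eq_mul]
    have hne0 : (nu 𝓕 S (A₀ ∩ S) : ℝ) ≠ 0 := by
      have := nu_pos (W := S) hA₀
      positivity
    field_simp
    simp
  have h3 : ∑ A ∈ 𝓕, Real.log ((nu 𝓕 S (A ∩ S) : ℝ))⁻¹ = - L 𝓕 S := by
    unfold L
    rw [← Finset.sum_neg_distrib]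
    exact Finset.sum_congr rfl fun A hA => Real.log_inv _
  rw [h2, h3, Real.log_div hk.ne' hm.ne'] at h1
  have h6 : (- L 𝓕 S) / 𝓕.card ≤ Real.log ((𝓕.image (· ∩ S)).card) - Real.log 𝓕.card := by
    rw [div_le_iff₀ hm]
    nlinarith
  rw [neg_div] at h6
  unfold ent
  linarith



def Pre (n i : ℕ) : Finset (Fin n) := Finset.univ.filter (fun x => x.val < i)

def Itv (n a i : ℕ) : Finset (Fin n) :=
  Finset.univ.filter (fun x => (i ≤ x.val ∧ x.val < i + a) ∨ x.val + n < i + a)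

lemma Pre_zero (n : ℕ) : Pre n 0 = ∅ := by
  ext x
  simp [Pre]

lemma Pre_n (n : ℕ) : Pre n n = Finset.univ := by
  ext x
  simp [Pre, x.isLt]

lemma card_Itv {n a i : ℕ} (hi : i < n) (ha : 1 ≤ a) (han : a ≤ n) : (Itv n a i).card = a := by
  have himg : (Itv n a i).image Fin.val
      = (Finset.Ico i (min (i + a) n)) ∪ Finset.range (i + a - n) := by
    ext j
    simp only [Finset.mem_image, Finset.mem_union, Finset.mem_Ico, Finset.mem_range, Itv,
      Finset.mem_filter, Finset.mem_univ, true_and, lt_min_iff]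
    constructor
    · rintro ⟨x, hx, rfl⟩
      have := x.isLt
      omega
    · intro hj
      have hjn : j < n := by omega
      refine ⟨⟨j, hjn⟩, ?_, rfl⟩
      show (i ≤ j ∧ j < i + a) ∨ j + n < i + a
      omega
  have hdis : Disjoint (Finset.Ico i (min (i + a) n)) (Finset.range (i + a - n)) := by
    rw [Finset.disjoint_left]
    intro j hj1 hj2
    rw [Finset.mem_Ico] at hj1
    rw [Finset.mem_range] at hj2
    omega
  rw [← Finset.card_image_of_injective (Itv n a i) Fin.val_injective, himg,
    Finset.card_union_of_disjoint hdis, Nat.card_Ico, Finset.card_range]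
  omega

lemma Pre_union_Itv_le {n a i : ℕ} (h : i + a ≤ n) :
    Pre n i ∪ Itv n a i = Pre n (i + a) := by
  ext x
  simp only [Pre, Itv, Finset.mem_union, Finset.mem_filter, Finset.mem_univ, true_and]
  have := x.isLt
  omega

lemma Pre_inter_Itv_le {n a i : ℕ} (h : i + a ≤ n) :
    Pre n i ∩ Itv n a i = ∅ := by
  ext x
  simp only [Pre, Itv, Finset.mem_inter, Finset.mem_filter, Finset.mem_univ, true_and,
    Finset.notMem_empty, iff_false, not_and]
  omega

lemma Pre_union_Itv_gt {n a i : ℕ} (hi : i < n) (h : n < i + a) :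
    Pre n i ∪ Itv n a i = Finset.univ := by
  ext x
  simp only [Pre, Itv, Finset.mem_union, Finset.mem_filter, Finset.mem_univ, true_and, iff_true]
  have := x.isLt
  omega

lemma Pre_inter_Itv_gt {n a i : ℕ} (h : n < i + a) (han : a ≤ n) :
    Pre n i ∩ Itv n a i = Pre n (i + a - n) := by
  ext x
  simp only [Pre, Itv, Finset.mem_inter, Finset.mem_filter, Finset.mem_univ, true_and]
  omega

end VolumeLB

open VolumeLB in
/-- Bollobás–Radcliffe volume lower bound: any family `𝓕 ⊆ 2^[n]` with
`1 ≤ |𝓕| ≤ 2^n` has an `a`-set whose trace has size at least `|𝓕|^{a/n}`. -/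
theorem volume_lower_bound (n a : ℕ) (ha : 1 ≤ a) (han : a ≤ n)
    (𝓕 : Finset (Finset (Fin n))) (h1 : 1 ≤ 𝓕.card) (h2 : 𝓕.card ≤ 2 ^ n) :
    ∃ T : Finset (Fin n), T.card = a ∧
      (𝓕.card : ℝ) ^ ((a : ℝ) / (n : ℝ)) ≤ ((𝓕.image (· ∩ T)).card : ℝ) := by
  classical
  have hn : 1 ≤ n := le_trans ha han
  have hne : 𝓕.Nonempty := Finset.card_pos.mp h1
  have hm : (0:ℝ) < 𝓕.card := by exact_mod_cast h1
  set g : ℕ → ℝ := fun i => ent 𝓕 (Pre n i) with hg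
  set G : ℕ → ℝ := fun j => ((j / n : ℕ) : ℝ) * Real.log 𝓕.card + g (j % n) with hG
  have hg0 : g 0 = 0 := by
    rw [hg]
    simp only
    rw [Pre_zero]
    exact ent_empty hne
  have hgn : g n = Real.log 𝓕.card := by
    rw [hg]
    simp only
    rw [Pre_n]
    exact ent_univ hne
  have hGlt : ∀ j < n, G j = g j := by
    intro j hj
    rw [hG]
    simp only
    rw [Nat.div_eq_of_lt hj, Nat.mod_eq_of_lt hj]
    simp
  have hGle : ∀ j ≤ n, G j = g j := by
    intro j hj
    rcases lt_or_eq_of_le hj with h | rfl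
    · exact hGlt j h
    · rw [hG]
      simp only
      rw [Nat.div_self (by omega), Nat.mod_self, hg0, hgn]
      simp
  have key : ∀ i < n, G (i + a) ≤ G i + ent 𝓕 (Itv n a i) := by
    intro i hi
    rw [hGlt i hi]
    rcases le_or_gt (i + a) n with h | h
    · rw [hGle _ h]
      have hs := ent_submodular hne (Pre n i) (Itv n a i)
      rw [Pre_union_Itv_le h, Pre_inter_Itv_le h, ent_empty hne] at hs
      linarith
    · have e1 : G (i + a) = Real.log 𝓕.card + g (i + a - n) := by
        rw [hG]
        simp only
        have hd : (i + a) / n = 1 := Nat.div_eq_of_lt_le (by omega) (by omega)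
        have hmod : (i + a) % n = i + a - n := by
          rw [Nat.mod_eq_sub_mod (by omega), Nat.mod_eq_of_lt (by omega)]
        rw [hd, hmod]
        simp
      have hs := ent_submodular hne (Pre n i) (Itv n a i)
      rw [Pre_union_Itv_gt hi h, Pre_inter_Itv_gt h han, ent_univ hne] at hs
      rw [e1]
      linarith
  have hshift : ∑ i ∈ Finset.range n, G (i + a)
      = a * Real.log 𝓕.card + ∑ i ∈ Finset.range n, G i := by
    have e1 : ∑ j ∈ Finset.Ico a (a + n), G j = ∑ i ∈ Finset.range n, G (i + a) := by
      rw [Finset.sum_Ico_eq_sum_range]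
      simp only [Nat.add_sub_cancel_left]
      exact Finset.sum_congr rfl fun i _ => by rw [Nat.add_comm]
    have e2 : ∑ j ∈ Finset.Ico a n, G j + ∑ j ∈ Finset.Ico n (a + n), G j
        = ∑ j ∈ Finset.Ico a (a + n), G j :=
      Finset.sum_Ico_consecutive G han (by omega)
    have e3 : ∑ j ∈ Finset.Ico n (a + n), G j = ∑ j ∈ Finset.range a, G (n + j) := by
      rw [Finset.sum_Ico_eq_sum_range]
      simp only [Nat.add_sub_cancel]
    have e4 : ∀ j ∈ Finset.range a, G (n + j) = Real.log 𝓕.card + G j := by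
      intro j hj
      rw [Finset.mem_range] at hj
      have hjn : j < n := by omega
      rw [hG]
      simp only
      have hd : (n + j) / n = 1 := Nat.div_eq_of_lt_le (by omega) (by omega)
      have hmod : (n + j) % n = j := by
        rw [Nat.add_comm, Nat.add_mod_right, Nat.mod_eq_of_lt hjn]
      rw [hd, hmod, Nat.div_eq_of_lt hjn, Nat.mod_eq_of_lt hjn]
      simp
    have e5 : ∑ j ∈ Finset.range a, G (n + j)
        = a * Real.log 𝓕.card + ∑ j ∈ Finset.range a, G j := by
      rw [Finset.sum_congr rfl e4, Finset.sum_add_distrib, Finset.sum_const,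
        Finset.card_range, nsmul_eq_mul]
    have e6 : ∑ j ∈ Finset.Ico 0 a, G j + ∑ j ∈ Finset.Ico a n, G j
        = ∑ j ∈ Finset.Ico 0 n, G j :=
      Finset.sum_Ico_consecutive G (Nat.zero_le a) han
    have e7 : ∑ j ∈ Finset.Ico 0 a, G j = ∑ j ∈ Finset.range a, G j := by
      rw [Finset.range_eq_Ico]
    have e8 : ∑ j ∈ Finset.Ico 0 n, G j = ∑ j ∈ Finset.range n, G j := by
      rw [Finset.range_eq_Ico]
    rw [← e1, ← e2, e3, e5]
    linarith
  have hsum : ∑ i ∈ Finset.range n, G (i + a)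
      ≤ ∑ i ∈ Finset.range n, (G i + ent 𝓕 (Itv n a i)) :=
    Finset.sum_le_sum fun i hi => key i (Finset.mem_range.mp hi)
  have hsplit : ∑ i ∈ Finset.range n, (G i + ent 𝓕 (Itv n a i))
      = ∑ i ∈ Finset.range n, G i + ∑ i ∈ Finset.range n, ent 𝓕 (Itv n a i) :=
    Finset.sum_add_distrib
  rw [hshift, hsplit] at hsum
  have hmain : (a : ℝ) * Real.log 𝓕.card ≤ ∑ i ∈ Finset.range n, ent 𝓕 (Itv n a i) := by
    linarith
  have havg : ∃ i ∈ Finset.range n,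
      (a : ℝ) / n * Real.log 𝓕.card ≤ ent 𝓕 (Itv n a i) := by
    apply Finset.exists_le_of_sum_le ⟨0, Finset.mem_range.mpr (by omega)⟩
    rw [Finset.sum_const, Finset.card_range, nsmul_eq_mul]
    have hn0 : (n:ℝ) ≠ 0 := by positivity
    calc (n : ℝ) * ((a : ℝ) / n * Real.log 𝓕.card)
        = (a : ℝ) * Real.log 𝓕.card := by field_simp
      _ ≤ _ := hmain
  obtain ⟨i, hi, hient⟩ := havg
  refine ⟨Itv n a i, card_Itv (Finset.mem_range.mp hi) ha han, ?_⟩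
  have htr := ent_le_log_trace hne (Itv n a i)
  have hkpos : (0:ℝ) < ((𝓕.image (· ∩ Itv n a i)).card : ℝ) := by
    exact_mod_cast Finset.card_pos.mpr (hne.image _)
  have hppos : (0:ℝ) < (𝓕.card : ℝ) ^ ((a:ℝ)/(n:ℝ)) := Real.rpow_pos_of_pos hm _
  have hlog : Real.log ((𝓕.card : ℝ) ^ ((a:ℝ)/(n:ℝ)))
      ≤ Real.log ((𝓕.image (· ∩ Itv n a i)).card) := by
    rw [Real.log_rpow hm]
    linarith
  calc (𝓕.card : ℝ) ^ ((a:ℝ)/(n:ℝ))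
      = Real.exp (Real.log ((𝓕.card : ℝ) ^ ((a:ℝ)/(n:ℝ)))) := (Real.exp_log hppos).symm
    _ ≤ Real.exp (Real.log ((𝓕.image (· ∩ Itv n a i)).card)) := Real.exp_le_exp.mpr hlog
    _ = ((𝓕.image (· ∩ Itv n a i)).card : ℝ) := Real.exp_log hkpos
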